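/- Let n ≥ 3 and m ≥ 3 be integers, let p_0,…,p_n ∈ ℝ^d and r_0,…,r_m ∈ ℝ^d, set P_n(t) := Σ_{i=0}^{n} p_i B_i^n(t) and R_m(t) := Σ_{i=0}^{m} r_i B_i^m(t), and let λ_1, λ_2, λ_3 be real numbers. Suppose the G³ conditions at t = 0 hold: R_m(0) = P_n(0), R_m'(0) = λ_1 P_n'(0), R_m''(0) = λ_1² P_n''(0) + λ_2 P_n'(0), and R_m'''(0) = λ_1³ P_n'''(0) + 3λ_1λ_2 P_n''(0) + λ_3 P_n'(0). Then: r_0 = p_0; r_1 = p_0 + (n/m)λ_1 Δp_0; r_2 = p_0 + (n/m)[2λ_1 + λ_2/(m-1)] Δp_0 + ((n-1)_2/(m-1)_2) λ_1² Δ²p_0; and r_3 = p_0 + (n/m)[3λ_1 + 3λ_2/(m-1) + λ_3/((m-2)_2)] Δp_0 + 3((n-1)_2/(m-1)_2)[λ_1² + λ_1λ_2/(m-2)] Δ²p_0 + ((n-2)_3/(m-2)_3) λ_1³ Δ³p_0, where (a)_k denotes the Pochhammer symbol and Δ is the forward difference operator. -/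

import Mathlib

open MeasureTheory Polynomial

/-- Bernstein polynomial `B_i^n(t) = C(n,i) t^i (1-t)^{n-i}` as a real function. -/
noncomputable def bern (n i : ℕ) (t : ℝ) : ℝ := (n.choose i : ℝ) * t ^ i * (1 - t) ^ (n - i)

/-- Pochhammer symbol `(a)_k = a(a+1)⋯(a+k-1)`. -/
noncomputable def poch (a : ℝ) (k : ℕ) : ℝ := (ascPochhammer ℝ k).eval a

/-- Forward difference operator: `fdiff q k i = Δ^k q_i`. -/
def fdiff {E : Type*} [AddCommGroup E] (q : ℕ → E) : ℕ → ℕ → E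
  | 0, i => q i
  | k + 1, i => fdiff q k (i + 1) - fdiff q k i

noncomputable def bernP (n i : ℕ) : Polynomial ℝ :=
  Polynomial.C (n.choose i : ℝ) * ((1 - Polynomial.X) ^ (n - i) * Polynomial.X ^ i)

lemma bern_eq (n i : ℕ) (t : ℝ) : bern n i t = (bernP n i).eval t := by
  simp [bern, bernP]; ring

lemma coeff_one_sub_X_pow (M k : ℕ) :
    ((1 - Polynomial.X : Polynomial ℝ) ^ M).coeff k = (-1 : ℝ) ^ k * M.choose k := by
  by_cases h : k ≤ M
  · have h1 : (1 - Polynomial.X : Polynomial ℝ)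
        = Polynomial.C (-1) * (Polynomial.X + Polynomial.C (-1)) := by
      simp [mul_add, ← Polynomial.C_mul]
      ring
    rw [h1, mul_pow, ← Polynomial.C_pow, Polynomial.coeff_C_mul, Polynomial.coeff_X_add_C_pow]
    have h2 : ((-1 : ℝ)) ^ M * (-1) ^ (M - k) = (-1) ^ k := by
      rw [← pow_add, show M + (M - k) = 2 * (M - k) + k by omega, pow_add, pow_mul]
      simp
    calc ((-1:ℝ)) ^ M * ((-1) ^ (M - k) * M.choose k)
        = ((-1:ℝ)) ^ M * (-1) ^ (M - k) * M.choose k := by ring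
      _ = (-1:ℝ) ^ k * M.choose k := by rw [h2]
  · rw [Nat.choose_eq_zero_of_lt (by omega), Polynomial.coeff_eq_zero_of_natDegree_lt]
    · simp
    · calc ((1 - Polynomial.X : Polynomial ℝ) ^ M).natDegree
          ≤ M * (1 - Polynomial.X : Polynomial ℝ).natDegree := Polynomial.natDegree_pow_le
        _ ≤ M * 1 := by
            gcongr
            · exact Polynomial.natDegree_sub_le _ _ |>.trans (by simp)
        _ < k := by omega

lemma coeff_bernP (N i k : ℕ) :
    (bernP N i).coeff k
      = if i ≤ k then (N.choose i : ℝ) * (-1) ^ (k - i) * ((N - i).choose (k - i) : ℝ) else 0 := by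
  rw [bernP, Polynomial.coeff_C_mul, Polynomial.coeff_mul_X_pow', coeff_one_sub_X_pow]
  split <;> ring

lemma cast_choose_three (N : ℕ) :
    ((N.choose 3 : ℕ) : ℝ) = N * ((N : ℝ) - 1) * ((N : ℝ) - 2) / 6 := by
  induction N with
  | zero => simp
  | succ n ih =>
    rw [Nat.choose_succ_succ]
    push_cast [ih, Nat.cast_choose_two]
    ring

variable {E : Type*} [NormedAddCommGroup E] [NormedSpace ℝ E]

lemma iteratedDeriv_sum_smul {ι : Type*} (s : Finset ι) (k : ℕ) :
    ∀ (p : ι → Polynomial ℝ) (v : ι → E),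
    iteratedDeriv k (fun t => ∑ i ∈ s, (p i).eval t • v i)
      = fun x => ∑ i ∈ s, ((Polynomial.derivative^[k] (p i)).eval x) • v i := by
  induction k with
  | zero => intro p v; simp [iteratedDeriv_zero]
  | succ k ih =>
    intro p v
    rw [iteratedDeriv_succ']
    have hd : deriv (fun t => ∑ i ∈ s, (p i).eval t • v i)
        = fun t => ∑ i ∈ s, ((p i).derivative).eval t • v i := by
      funext t
      rw [deriv_fun_sum (fun i _ => ((p i).differentiableAt).smul_const (v i))]
      exact Finset.sum_congr rfl fun i _ => by
        rw [deriv_smul_const ((p i).differentiableAt), Polynomial.deriv]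
    rw [hd, ih (fun i => (p i).derivative) v]
    funext x
    simp [Function.iterate_succ_apply]

lemma bez_deriv (N k : ℕ) (hk : k ≤ N) (q : ℕ → E) :
    iteratedDeriv k (fun t => ∑ i ∈ Finset.range (N + 1), bern N i t • q i) 0
      = ∑ i ∈ Finset.range (k + 1),
          ((Nat.factorial k : ℝ) * (N.choose i : ℝ) * (-1) ^ (k - i) * ((N - i).choose (k - i) : ℝ)) • q i := by
  have hfun : (fun t => ∑ i ∈ Finset.range (N + 1), bern N i t • q i)
      = fun t => ∑ i ∈ Finset.range (N + 1), (bernP N i).eval t • q i := by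
    funext t; exact Finset.sum_congr rfl fun i _ => by rw [bern_eq]
  rw [hfun, iteratedDeriv_sum_smul]
  dsimp only
  have hz : ∀ i ∈ Finset.range (N + 1), i ∉ Finset.range (k + 1) →
      ((Polynomial.derivative^[k] (bernP N i)).eval (0:ℝ)) • q i = 0 := by
    intro i _ hi
    rw [← Polynomial.coeff_zero_eq_eval_zero, Polynomial.coeff_iterate_derivative, zero_add,
      coeff_bernP, if_neg (by simp at hi; omega)]
    simp
  rw [← Finset.sum_subset (Finset.range_subset_range.mpr (by omega : k + 1 ≤ N + 1)) hz]
  refine Finset.sum_congr rfl fun i hi => ?_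
  rw [← Polynomial.coeff_zero_eq_eval_zero, Polynomial.coeff_iterate_derivative, zero_add,
    coeff_bernP, if_pos (by simp at hi; omega), Nat.descFactorial_self, nsmul_eq_mul]
  ring_nf

lemma bez_eval0 (N : ℕ) (q : ℕ → E) :
    (∑ i ∈ Finset.range (N + 1), bern N i (0:ℝ) • q i) = q 0 := by
  simpa [iteratedDeriv_zero, Nat.factorial] using bez_deriv N 0 (Nat.zero_le N) q

lemma bez_deriv1 (N : ℕ) (hN : 1 ≤ N) (q : ℕ → E) :
    iteratedDeriv 1 (fun t => ∑ i ∈ Finset.range (N + 1), bern N i t • q i) 0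
      = (N : ℝ) • (q 1 - q 0) := by
  rw [bez_deriv N 1 hN]
  simp [Finset.sum_range_succ, Nat.factorial]
  match_scalars <;> ring

lemma bez_deriv2 (N : ℕ) (hN : 2 ≤ N) (q : ℕ → E) :
    iteratedDeriv 2 (fun t => ∑ i ∈ Finset.range (N + 1), bern N i t • q i) 0
      = ((N : ℝ) * ((N : ℝ) - 1)) • ((q 2 - q 1) - (q 1 - q 0)) := by
  have e1 : ((N - 1 : ℕ) : ℝ) = (N : ℝ) - 1 := by
    rw [Nat.cast_sub (by omega)]; norm_num
  rw [bez_deriv N 2 hN]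
  simp [Finset.sum_range_succ, Nat.factorial, Nat.cast_choose_two, e1]
  match_scalars <;> ring

lemma bez_deriv3 (N : ℕ) (hN : 3 ≤ N) (q : ℕ → E) :
    iteratedDeriv 3 (fun t => ∑ i ∈ Finset.range (N + 1), bern N i t • q i) 0
      = ((N : ℝ) * ((N : ℝ) - 1) * ((N : ℝ) - 2)) •
          (((q 3 - q 2) - (q 2 - q 1)) - ((q 2 - q 1) - (q 1 - q 0))) := by
  have e1 : ((N - 1 : ℕ) : ℝ) = (N : ℝ) - 1 := by
    rw [Nat.cast_sub (by omega)]; norm_num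
  have e2 : ((N - 2 : ℕ) : ℝ) = (N : ℝ) - 2 := by
    rw [Nat.cast_sub (by omega)]; norm_num
  rw [bez_deriv N 3 hN]
  simp [Finset.sum_range_succ, Nat.factorial, Nat.cast_choose_two, cast_choose_three, e1, e2]
  match_scalars <;> ring

lemma poch_two (a : ℝ) : poch a 2 = a * (a + 1) := by
  simp [poch, ascPochhammer_succ_right, ascPochhammer_one]

lemma poch_three (a : ℝ) : poch a 3 = a * (a + 1) * (a + 2) := by
  simp [poch, ascPochhammer_succ_right, ascPochhammer_one]

lemma fd1 {E : Type*} [AddCommGroup E] (q : ℕ → E) : fdiff q 1 0 = q 1 - q 0 := rfl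
lemma fd2 {E : Type*} [AddCommGroup E] (q : ℕ → E) :
    fdiff q 2 0 = (q 2 - q 1) - (q 1 - q 0) := rfl
lemma fd3 {E : Type*} [AddCommGroup E] (q : ℕ → E) :
    fdiff q 3 0 = ((q 3 - q 2) - (q 2 - q 1)) - ((q 2 - q 1) - (q 1 - q 0)) := rfl

set_option maxHeartbeats 2000000 in
theorem stmt13 (d n m : ℕ) (hn : 3 ≤ n) (hm : 3 ≤ m)
    (p r : ℕ → EuclideanSpace ℝ (Fin d)) (lam1 lam2 lam3 : ℝ)
    (P R : ℝ → EuclideanSpace ℝ (Fin d))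
    (hP : P = fun t : ℝ => ∑ i ∈ Finset.range (n + 1), bern n i t • p i)
    (hR : R = fun t : ℝ => ∑ i ∈ Finset.range (m + 1), bern m i t • r i)
    -- the G³ conditions at t = 0
    (h0 : R 0 = P 0)
    (h1 : deriv R 0 = lam1 • deriv P 0)
    (h2 : iteratedDeriv 2 R 0 = lam1 ^ 2 • iteratedDeriv 2 P 0 + lam2 • deriv P 0)
    (h3 : iteratedDeriv 3 R 0 = lam1 ^ 3 • iteratedDeriv 3 P 0 +
      (3 * lam1 * lam2) • iteratedDeriv 2 P 0 + lam3 • deriv P 0) :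
    r 0 = p 0 ∧
    r 1 = p 0 + ((n : ℝ) / (m : ℝ) * lam1) • fdiff p 1 0 ∧
    r 2 = p 0 + ((n : ℝ) / (m : ℝ) * (2 * lam1 + lam2 / ((m : ℝ) - 1))) • fdiff p 1 0 +
        (poch ((n : ℝ) - 1) 2 / poch ((m : ℝ) - 1) 2 * lam1 ^ 2) • fdiff p 2 0 ∧
    r 3 = p 0 +
        ((n : ℝ) / (m : ℝ) *
          (3 * lam1 + 3 * lam2 / ((m : ℝ) - 1) + lam3 / poch ((m : ℝ) - 2) 2)) • fdiff p 1 0 +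
        (3 * (poch ((n : ℝ) - 1) 2 / poch ((m : ℝ) - 1) 2) *
          (lam1 ^ 2 + lam1 * lam2 / ((m : ℝ) - 2))) • fdiff p 2 0 +
        (poch ((n : ℝ) - 2) 3 / poch ((m : ℝ) - 2) 3 * lam1 ^ 3) • fdiff p 3 0 := by
  subst hP hR
  have hm3 : (3 : ℝ) ≤ (m : ℝ) := by exact_mod_cast hm
  have hm0 : (m : ℝ) ≠ 0 := by intro h; linarith
  have hm1 : (m : ℝ) - 1 ≠ 0 := by intro h; linarith
  have hm2 : (m : ℝ) - 2 ≠ 0 := by intro h; linarith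
  -- derivative identities
  simp only [← iteratedDeriv_one] at h1 h2 h3
  simp only [bez_deriv1 m (show 1 ≤ m by omega), bez_deriv1 n (show 1 ≤ n by omega),
    bez_deriv2 m (show 2 ≤ m by omega), bez_deriv2 n (show 2 ≤ n by omega),
    bez_deriv3 m (show 3 ≤ m by omega), bez_deriv3 n (show 3 ≤ n by omega)] at h1 h2 h3
  have hr0 : r 0 = p 0 := by simpa [bez_eval0] using h0
  have pm1 : poch ((m:ℝ) - 1) 2 = ((m:ℝ) - 1) * (m:ℝ) := by rw [poch_two]; ring
  have pm2 : poch ((m:ℝ) - 2) 2 = ((m:ℝ) - 2) * ((m:ℝ) - 1) := by rw [poch_two]; ring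
  have pm3 : poch ((m:ℝ) - 2) 3 = ((m:ℝ) - 2) * (((m:ℝ) - 1) * (m:ℝ)) := by rw [poch_three]; ring
  have pn1 : poch ((n:ℝ) - 1) 2 = ((n:ℝ) - 1) * (n:ℝ) := by rw [poch_two]; ring
  have pn3 : poch ((n:ℝ) - 2) 3 = ((n:ℝ) - 2) * (((n:ℝ) - 1) * (n:ℝ)) := by rw [poch_three]; ring
  -- r 1
  have e1 : r 1 = r 0 + (m : ℝ)⁻¹ • ((m : ℝ) • (r 1 - r 0)) := by
    rw [inv_smul_smul₀ hm0]; module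
  rw [h1] at e1
  have hr1 : r 1 = p 0 + ((n : ℝ) / (m : ℝ) * lam1) • fdiff p 1 0 := by
    rw [e1, hr0, fd1]
    match_scalars <;> (field_simp; try ring)
  -- r 2
  have c2 : (m : ℝ) * ((m : ℝ) - 1) ≠ 0 := mul_ne_zero hm0 hm1
  have e2 : r 2 = ((2 : ℝ) • r 1 - r 0) +
      ((m : ℝ) * ((m : ℝ) - 1))⁻¹ • (((m : ℝ) * ((m : ℝ) - 1)) • ((r 2 - r 1) - (r 1 - r 0))) := by
    rw [inv_smul_smul₀ c2]; module
  rw [h2] at e2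
  have hr2 : r 2 = p 0 + ((n : ℝ) / (m : ℝ) * (2 * lam1 + lam2 / ((m : ℝ) - 1))) • fdiff p 1 0 +
      (poch ((n : ℝ) - 1) 2 / poch ((m : ℝ) - 1) 2 * lam1 ^ 2) • fdiff p 2 0 := by
    rw [e2, hr1, hr0, fd1, fd2, pm1, pn1]
    match_scalars <;> (field_simp; try ring)
  -- r 3
  have c3 : (m : ℝ) * ((m : ℝ) - 1) * ((m : ℝ) - 2) ≠ 0 := mul_ne_zero c2 hm2
  have e3 : r 3 = ((3 : ℝ) • r 2 - (3 : ℝ) • r 1 + r 0) +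
      ((m : ℝ) * ((m : ℝ) - 1) * ((m : ℝ) - 2))⁻¹ •
        (((m : ℝ) * ((m : ℝ) - 1) * ((m : ℝ) - 2)) •
          (((r 3 - r 2) - (r 2 - r 1)) - ((r 2 - r 1) - (r 1 - r 0)))) := by
    rw [inv_smul_smul₀ c3]; module
  rw [h3] at e3
  have hr3 : r 3 = p 0 +
      ((n : ℝ) / (m : ℝ) *
        (3 * lam1 + 3 * lam2 / ((m : ℝ) - 1) + lam3 / poch ((m : ℝ) - 2) 2)) • fdiff p 1 0 +
      (3 * (poch ((n : ℝ) - 1) 2 / poch ((m : ℝ) - 1) 2) *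
        (lam1 ^ 2 + lam1 * lam2 / ((m : ℝ) - 2))) • fdiff p 2 0 +
      (poch ((n : ℝ) - 2) 3 / poch ((m : ℝ) - 2) 3 * lam1 ^ 3) • fdiff p 3 0 := by
    rw [e3, hr2, hr1, hr0, fd1, fd2, fd3, pm1, pm2, pm3, pn1, pn3, mul_inv, mul_inv]
    match_scalars <;> (field_simp; try ring)
  exact ⟨hr0, hr1, hr2, hr3⟩
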